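/- Let u, m, b, δ be nonnegative integers with m, b, δ ≥ 1 and gcd(b, n) = 1. Let C be a cyclic code of length n over F_q and α a primitive n-th root of unity. If every element of the set {α^u, α^{u+b}, ..., α^{u+(mδ-1)b}} ∪ ⋃_{i=0}^{m} {α^{u+((m+i)δ+1)b}, α^{u+((m+i)δ+2)b}, ..., α^{u+((m+i)δ+δ-1)b}} is a root of the generator polynomial of C, then the minimum Hamming distance of C is at least mδ + δ. -/

import Mathlib

noncomputable section

open Polynomial
open scoped Pointwise

/-- The cyclic code of length `n` over `K` whose complete defining set is `Z ⊆ L`,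
where `L` is an extension of `K` containing the `n`-th roots of unity:
codewords are those `c` whose associated polynomial vanishes on `Z`. -/
def cyclicCodeOn (K L : Type) [Field K] [Field L] [Algebra K L]
    (n : ℕ) (Z : Set L) : Submodule K (Fin n → K) where
  carrier := {c | ∀ β ∈ Z, ∑ i : Fin n, algebraMap K L (c i) * β ^ (i : ℕ) = 0}
  add_mem' := by
    intro a b ha hb β hβ
    simp only [Pi.add_apply, map_add, add_mul, Finset.sum_add_distrib]
    rw [ha β hβ, hb β hβ, add_zero]
  zero_mem' := by intro β hβ; simp
  smul_mem' := by
    intro r a ha β hβ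
    simp only [Pi.smul_apply, smul_eq_mul, map_mul, mul_assoc, ← Finset.mul_sum]
    rw [ha β hβ, mul_zero]

/-- Cyclic code of length `n` over `F` with complete defining set `Z ⊆ F`. -/
abbrev cyclicCode (F : Type) [Field F] (n : ℕ) (Z : Set F) : Submodule F (Fin n → F) :=
  cyclicCodeOn F F n Z

/-- The dual code of a code `C ⊆ F^n` (under the standard inner product). -/
def dualSet (F : Type) [Field F] (n : ℕ) (C : Set (Fin n → F)) : Set (Fin n → F) :=
  {v | ∀ c ∈ C, ∑ i : Fin n, v i * c i = 0}

open Classical in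
/-- Hamming weight of a vector. -/
def wt {F : Type} [Zero F] {n : ℕ} (c : Fin n → F) : ℕ :=
  (Finset.univ.filter (fun i => c i ≠ 0)).card

/-- `d` is the minimum Hamming distance (= minimum nonzero weight) of the code `C`. -/
def IsMinDist {F : Type} [Zero F] {n : ℕ} (C : Set (Fin n → F)) (d : ℕ) : Prop :=
  (∃ c ∈ C, c ≠ 0 ∧ wt c = d) ∧ ∀ c ∈ C, c ≠ 0 → d ≤ wt c

open Classical in
/-- `C` has `(r, δ)`-locality: every coordinate lies in a recovery set `S` of size
at most `r + δ - 1` such that the punctured code `C|_S` has minimum distance `≥ δ`. -/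
def HasLocality {F : Type} [Zero F] {n : ℕ} (C : Set (Fin n → F)) (r δ : ℕ) : Prop :=
  ∀ i : Fin n, ∃ S : Finset (Fin n), i ∈ S ∧ S.card ≤ r + δ - 1 ∧
    ∀ c ∈ C, ∀ c' ∈ C, (∃ j ∈ S, c j ≠ c' j) →
      δ ≤ (S.filter (fun j => c j ≠ c' j)).card

/-- The polynomial `c₀ + c₁ x + ⋯ + c_{n-1} x^{n-1}` associated to a vector. -/
def vecPoly {F : Type} [Semiring F] {n : ℕ} (c : Fin n → F) : Polynomial F :=
  ∑ i : Fin n, Polynomial.C (c i) * Polynomial.X ^ (i : ℕ)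

/-- The cyclic code of length `n` generated by `g(x)` (a divisor of `x^n - 1`). -/
def codeOfGen (F : Type) [Field F] (n : ℕ) (g : Polynomial F) : Set (Fin n → F) :=
  {c | g ∣ vecPoly c}

/-- Ceiling division `⌈a / b⌉` on naturals. -/
def ceilDiv' (a b : ℕ) : ℕ := (a + b - 1) / b

/-- The code parameters meet the Singleton-like bound for `(r, δ)`-LRCs:
`d = n - k - (⌈k/r⌉ - 1)(δ - 1) + 1`. -/
def SingletonOpt (n k r δ d : ℕ) : Prop :=
  d = n - k - (ceilDiv' k r - 1) * (δ - 1) + 1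

set_option maxHeartbeats 1000000 in
/-- generalized Betti–Sala bound. If the complete defining set of a cyclic
code contains `{α^{u+jb} : 0 ≤ j ≤ mδ-1} ∪ ⋃_{i=0}^m {α^{u+((m+i)δ+t)b} : 1 ≤ t ≤ δ-1}`,
then every nonzero codeword has weight at least `mδ + δ`. -/
theorem stmt2 (F L : Type) [Field F] [Field L] [Algebra F L]
    (n u m b δ : ℕ) (hn : 0 < n) (hm : 0 < m) (hb : 0 < b) (hδ : 0 < δ)
    (hcop : Nat.Coprime b n) (hcopnq : Nat.Coprime n (ringChar F))
    (α : L) (hα : IsPrimitiveRoot α n)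
    (g : Polynomial F) (hgdvd : g ∣ Polynomial.X ^ n - 1)
    (h1 : ∀ j < m * δ, (g.map (algebraMap F L)).IsRoot (α ^ (u + j * b)))
    (h2 : ∀ i ≤ m, ∀ t, 1 ≤ t → t ≤ δ - 1 →
      (g.map (algebraMap F L)).IsRoot (α ^ (u + ((m + i) * δ + t) * b)))
    (c : Fin n → F) (hc : c ∈ codeOfGen F n g) (hc0 : c ≠ 0) :
    m * δ + δ ≤ wt c := by
  classical
  by_contra hlt
  push_neg at hlt
  set φ := algebraMap F L with hφ
  have hφinj : Function.Injective φ := (algebraMap F L).injective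
  have hα0 : α ≠ 0 := hα.ne_zero hn.ne'
  have hβ : IsPrimitiveRoot (α ^ b) n := hα.pow_of_coprime b hcop
  set T : Finset (Fin n) := Finset.univ.filter (fun i => c i ≠ 0) with hTdef
  have hwt : wt c = T.card := rfl
  set w := T.card with hw
  rw [hwt] at hlt
  have hcT : ∀ i : Fin n, i ∈ T ↔ c i ≠ 0 := by intro i; simp [hTdef]
  set x : Fin n → L := fun i => (α ^ b) ^ (i : ℕ) with hx
  set d : Fin n → L := fun i => φ (c i) * α ^ (u * (i : ℕ)) with hd
  set s : ℕ → L := fun j => ∑ i ∈ T, d i * x i ^ j with hs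
  have hx0 : ∀ i : Fin n, x i ≠ 0 := fun i => pow_ne_zero _ (pow_ne_zero _ hα0)
  have hxinj : ∀ i i' : Fin n, x i = x i' → i = i' := by
    intro i i' h
    exact Fin.ext (hβ.pow_inj i.isLt i'.isLt h)
  have hd0 : ∀ i ∈ T, d i ≠ 0 := by
    intro i hi
    have hci : c i ≠ 0 := (hcT i).1 hi
    exact mul_ne_zero (fun h => hci (hφinj (h.trans (map_zero φ).symm))) (pow_ne_zero _ hα0)
  -- s in terms of evaluation
  have hs_eval : ∀ j : ℕ, s j = ((vecPoly c).map φ).eval (α ^ (u + j * b)) := by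
    intro j
    rw [vecPoly, Polynomial.map_sum]
    simp only [Polynomial.map_mul, Polynomial.map_pow, Polynomial.map_C, Polynomial.map_X,
      Polynomial.eval_finset_sum, Polynomial.eval_mul, Polynomial.eval_pow, Polynomial.eval_C,
      Polynomial.eval_X]
    rw [hs]
    rw [← Finset.sum_subset (Finset.subset_univ T) (fun i _ hi => by
      have : c i = 0 := by
        by_contra hne
        exact hi ((hcT i).2 hne)
      simp [this])]
    apply Finset.sum_congr rfl
    intro i _
    simp only [hd, hx]
    rw [← pow_mul, ← pow_mul, ← pow_mul]
    have hexp : u * (i : ℕ) + b * ((i : ℕ) * j) = (u + j * b) * (i : ℕ) := by ring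
    rw [mul_assoc, ← pow_add, hexp]
  have hsz : ∀ j : ℕ, (g.map φ).IsRoot (α ^ (u + j * b)) → s j = 0 := by
    intro j hroot
    rw [hs_eval j]
    obtain ⟨q, hq⟩ := hc
    rw [hq, Polynomial.map_mul, Polynomial.eval_mul, hroot, zero_mul]
  -- vanishing pattern
  have hsZ : ∀ p : ℕ, p < (2 * m + 1) * δ → (∀ i ≤ m, p ≠ (m + i) * δ) → s p = 0 := by
    intro p hp hpne
    by_cases hpm : p < m * δ
    · exact hsz p (h1 p hpm)
    · push_neg at hpm
      set q := p / δ with hqdef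
      set t := p % δ with htdef
      have hq1 : δ * q + t = p := Nat.div_add_mod p δ
      have ht : t < δ := Nat.mod_lt _ hδ
      have hmq : m ≤ q := (Nat.le_div_iff_mul_le hδ).2 hpm
      have hq2 : q < 2 * m + 1 := by
        rw [hqdef]
        exact (Nat.div_lt_iff_lt_mul hδ).2 hp
      by_cases ht0 : t = 0
      · exfalso
        apply hpne (q - m) (by omega)
        have e1 : m + (q - m) = q := by omega
        rw [e1, mul_comm q δ]
        linarith [hq1]
      · have hp_eq : p = (m + (q - m)) * δ + t := by
          have e1 : m + (q - m) = q := by omega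
          rw [e1, mul_comm q δ]
          linarith [hq1]
        rw [hp_eq]
        exact hsz _ (h2 (q - m) (by omega) t (by omega) (by omega))
  -- the locator polynomial
  set σ : Polynomial L := ∏ i ∈ T, (Polynomial.X - Polynomial.C (x i)) with hσdef
  have hσmonic : σ.Monic :=
    Polynomial.monic_prod_of_monic _ _ (fun i _ => Polynomial.monic_X_sub_C _)
  have hσdeg : σ.natDegree = w := by
    rw [hσdef, Polynomial.natDegree_prod _ _ (fun i _ => Polynomial.X_sub_C_ne_zero _)]
    simp [Polynomial.natDegree_X_sub_C]
    rfl
  have hσ0 : σ.coeff 0 ≠ 0 := by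
    rw [Polynomial.coeff_zero_eq_eval_zero, hσdef, Polynomial.eval_prod]
    rw [Finset.prod_ne_zero_iff]
    intro i _
    simp only [Polynomial.eval_sub, Polynomial.eval_X, Polynomial.eval_C, zero_sub, neg_ne_zero]
    exact hx0 i
  have hσroot : ∀ i ∈ T, σ.eval (x i) = 0 := by
    intro i hi
    rw [hσdef, Polynomial.eval_prod]
    exact Finset.prod_eq_zero hi (by simp)
  -- key summation lemma
  have key : ∀ (p : Polynomial L) (N : ℕ), p.natDegree < N → ∀ j0 : ℕ,
      ∑ k ∈ Finset.range N, p.coeff k * s (j0 + k)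
        = ∑ i ∈ T, d i * x i ^ j0 * p.eval (x i) := by
    intro p N hN j0
    calc ∑ k ∈ Finset.range N, p.coeff k * s (j0 + k)
        = ∑ k ∈ Finset.range N, ∑ i ∈ T, p.coeff k * (d i * (x i ^ j0 * x i ^ k)) := by
          apply Finset.sum_congr rfl
          intro k _
          rw [hs]
          simp only
          rw [Finset.mul_sum]
          apply Finset.sum_congr rfl
          intro i _
          rw [pow_add]
      _ = ∑ i ∈ T, ∑ k ∈ Finset.range N, p.coeff k * (d i * (x i ^ j0 * x i ^ k)) :=
          Finset.sum_comm
      _ = ∑ i ∈ T, d i * x i ^ j0 * p.eval (x i) := by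
          apply Finset.sum_congr rfl
          intro i _
          rw [Polynomial.eval_eq_sum_range' hN, Finset.mul_sum]
          apply Finset.sum_congr rfl
          intro k _
          ring
  -- if s vanishes on [0, w-1] then contradiction
  have hvand : (∀ j < w, s j = 0) → False := by
    intro hz
    have hTne : T.Nonempty := by
      obtain ⟨i, hi⟩ := Function.ne_iff.1 hc0
      exact ⟨i, (hcT i).2 hi⟩
    obtain ⟨i0, hi0⟩ := hTne
    set p : Polynomial L := ∏ i ∈ T.erase i0, (Polynomial.X - Polynomial.C (x i)) with hpdef
    have hwpos : 0 < w := Finset.card_pos.2 ⟨i0, hi0⟩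
    have hpdeg : p.natDegree < w := by
      have h1' : p.natDegree = (T.erase i0).card := by
        rw [hpdef, Polynomial.natDegree_prod _ _ (fun i _ => Polynomial.X_sub_C_ne_zero _)]
        simp [Polynomial.natDegree_X_sub_C]
      rw [h1', Finset.card_erase_of_mem hi0]
      omega
    have h := key p w hpdeg 0
    rw [Finset.sum_eq_zero (fun k hk => by
      rw [zero_add, hz k (Finset.mem_range.1 hk), mul_zero])] at h
    rw [Finset.sum_eq_single i0 (fun i hi hne => by
      have : p.eval (x i) = 0 := by
        rw [hpdef, Polynomial.eval_prod]
        exact Finset.prod_eq_zero (Finset.mem_erase.2 ⟨hne, hi⟩) (by simp)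
      rw [this, mul_zero]) (fun h' => absurd hi0 h')] at h
    have hpe : p.eval (x i0) ≠ 0 := by
      rw [hpdef, Polynomial.eval_prod, Finset.prod_ne_zero_iff]
      intro i hi
      simp only [Polynomial.eval_sub, Polynomial.eval_X, Polynomial.eval_C, sub_ne_zero]
      intro hxx
      exact (Finset.mem_erase.1 hi).1 (hxinj i0 i hxx).symm
    rw [pow_zero, mul_one] at h
    rcases mul_eq_zero.1 h.symm with h3 | h3
    · exact hd0 i0 hi0 h3
    · exact hpe h3
  -- main relation from the recurrence
  have hrel : ∀ j : ℕ, ∑ k ∈ Finset.range (w + 1), σ.coeff k * s (j + k) = 0 := by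
    intro j
    rw [key σ (w + 1) (by rw [hσdeg]; omega) j]
    exact Finset.sum_eq_zero (fun i hi => by rw [hσroot i hi, mul_zero])
  have hσw : σ.coeff w = 1 := by
    have := hσmonic.coeff_natDegree
    rwa [hσdeg] at this
  -- case split on w
  by_cases hwm : w ≤ m * δ
  · exact hvand (fun j hj => hsz j (h1 j (by omega)))
  · push_neg at hwm
    set e := w - m * δ with he
    have he1 : 1 ≤ e := by omega
    have he2 : e ≤ δ - 1 := by omega
    have he3 : e < δ := by omega
    have hweq : w = m * δ + e := by omega
    have hδ2 : 2 ≤ δ := by omega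
    set a : ℕ → L := fun i => s ((m + i) * δ) with ha
    have hbig1 : (2 * m + 1) * δ = m * δ + m * δ + δ := by ring
    by_cases h0 : a 0 = 0
    · -- branch A: all a i = 0
      have hall : ∀ v, v ≤ m → a v = 0 := by
        intro v
        induction v using Nat.strong_induction_on with
        | _ v ih =>
          intro hvm
          rcases Nat.eq_zero_or_pos v with hv0 | hv1
          · rw [hv0]; exact h0
          · have hev : e ≤ v * δ := le_trans he3.le (Nat.le_mul_of_pos_left δ hv1)
            have hA : (v * δ - e) + w = (m + v) * δ := by
              rw [hweq, add_mul]
              zify [hev]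
              ring
            have hbound : (m + v) * δ ≤ 2 * m * δ := Nat.mul_le_mul_right δ (by omega)
            have hbound2 : 2 * m * δ + δ ≤ (2 * m + 1) * δ := by
              have : (2 * m + 1) * δ = 2 * m * δ + δ := by ring
              omega
            have hone : ∑ k ∈ Finset.range (w + 1), σ.coeff k * s ((v * δ - e) + k)
                = σ.coeff w * s ((v * δ - e) + w) := by
              apply Finset.sum_eq_single w
              · intro k hk hkw
                have hkr : k < w + 1 := Finset.mem_range.1 hk
                have hkw2 : k < w := by omega
                by_cases hex : ∃ i, i ≤ m ∧ (v * δ - e) + k = (m + i) * δ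
                · obtain ⟨i, him, hie⟩ := hex
                  have hlt2 : (m + i) * δ < (m + v) * δ := by linarith
                  have hiv : i < v := by
                    have := lt_of_mul_lt_mul_right hlt2 (Nat.zero_le δ)
                    omega
                  have hzz : s ((v * δ - e) + k) = 0 := by
                    rw [hie]
                    exact ih i hiv him
                  rw [hzz, mul_zero]
                · push_neg at hex
                  have hzz : s ((v * δ - e) + k) = 0 := by
                    apply hsZ _ (by linarith) (fun i hi => hex i hi)
                  rw [hzz, mul_zero]
              · intro h'
                exact absurd (Finset.mem_range.2 (by omega)) h'
            have hrel' := (hone.symm).trans (hrel (v * δ - e))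
            rw [hA, hσw, one_mul] at hrel'
            exact hrel'
      apply hvand
      intro j hj
      by_cases hex : ∃ i, i ≤ m ∧ j = (m + i) * δ
      · obtain ⟨i, him, hji⟩ := hex
        rw [hji]
        exact hall i him
      · push_neg at hex
        exact hsZ j (by nlinarith [Nat.zero_le (m*δ)]) (fun i hi => hex i hi)
    · -- branch B: a 0 ≠ 0, show σ.coeff ((m-r)δ) = 0 for all r ≤ m
      have hB : ∀ r, r ≤ m → σ.coeff ((m - r) * δ) = 0 := by
        intro r
        induction r using Nat.strong_induction_on with
        | _ r ih =>
          intro hrm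
          have hmr : r * δ + (m - r) * δ = m * δ := by
            rw [← add_mul, Nat.add_sub_cancel' hrm]
          have hmrw : (m - r) * δ ≤ m * δ := Nat.mul_le_mul_right δ (by omega)
          have hrw : r * δ ≤ m * δ := Nat.mul_le_mul_right δ (by omega)
          have hrm2 : (r + m) * δ = r * δ + m * δ := add_mul r m δ
          have hone : ∑ k ∈ Finset.range (w + 1), σ.coeff k * s (r * δ + k)
              = σ.coeff ((m - r) * δ) * s (r * δ + (m - r) * δ) := by
            apply Finset.sum_eq_single ((m - r) * δ)
            · intro k hk hkw
              have hkr : k < w + 1 := Finset.mem_range.1 hk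
              by_cases hex : ∃ i, i ≤ m ∧ r * δ + k = (m + i) * δ
              · obtain ⟨i, him, hie⟩ := hex
                have hi1 : 1 ≤ i := by
                  rcases Nat.eq_zero_or_pos i with h' | h'
                  · exfalso
                    apply hkw
                    subst h'
                    have hie' : r * δ + k = m * δ := by simpa using hie
                    linarith
                  · exact h'
                have hile : (m + i) * δ ≤ (r + m) * δ + e := by linarith
                have hir : i ≤ r := by
                  by_contra hgt
                  push_neg at hgt
                  have h5 : (r + m + 1) * δ ≤ (m + i) * δ := Nat.mul_le_mul_right δ (by omega)
                  have h6 : (r + m + 1) * δ = (r + m) * δ + δ := by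
                    rw [add_mul, one_mul]
                  linarith
                have hkeq : k = (m - (r - i)) * δ := by
                  have e1 : (m - (r - i)) * δ + r * δ = (m + i) * δ := by
                    rw [← add_mul]
                    congr 1
                    omega
                  linarith
                rw [hkeq, ih (r - i) (by omega) (by omega), zero_mul]
              · push_neg at hex
                have hzz : s (r * δ + k) = 0 := by
                  apply hsZ _ (by linarith) (fun i hi => hex i hi)
                rw [hzz, mul_zero]
            · intro h'
              exact absurd (Finset.mem_range.2 (by linarith)) h'
          have hrel' := (hone.symm).trans (hrel (r * δ))
          rw [hmr] at hrel'
          have hs0 : s (m * δ) = a 0 := by rw [ha]; simp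
          rw [hs0] at hrel'
          rcases mul_eq_zero.1 hrel' with h3 | h3
          · exact h3
          · exact absurd h3 h0
      have hfin := hB m le_rfl
      rw [Nat.sub_self, zero_mul] at hfin
      exact hσ0 hfin
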